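/- Let ξ ∈ (0,1) and c ∈ ℝ satisfy c² ξ² = 4(1 − ξ) F(1 − ξ). Then 1 − ξ ≥ c² / (c_s² + M), where M := sup_{r ∈ [0,1]} |f''(r)|. -/

import Mathlib

open Real MeasureTheory

/-- Lower bound `1 - ξ ≥ c² / (c_s² + M)` for a zero of `c²ξ² = 4(1-ξ)F(1-ξ)`. -/
theorem stmt_3 (f : ℝ → ℝ) (U : Set ℝ) (hU : IsOpen U) (hUIcc : Set.Icc (0:ℝ) 1 ⊆ U)
    (hf : ContDiffOn ℝ 2 f U) (hf1 : f 1 = 0) (hf'1 : deriv f 1 < 0)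
    (cs M : ℝ) (hcs : cs = Real.sqrt (-(2 * deriv f 1)))
    (hM : M = sSup ((fun r => |deriv (deriv f) r|) '' Set.Icc (0:ℝ) 1))
    (F : ℝ → ℝ) (hF : ∀ r, F r = ∫ ρ in r..1, f ρ)
    (ξ c : ℝ) (hξ : ξ ∈ Set.Ioo (0:ℝ) 1)
    (heq : c ^ 2 * ξ ^ 2 = 4 * (1 - ξ) * F (1 - ξ)) :
    1 - ξ ≥ c ^ 2 / (cs ^ 2 + M) := by
  obtain ⟨hξ0, hξ1⟩ := hξ
  set a : ℝ := 1 - ξ with ha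
  have haI : a ∈ Set.Icc (0:ℝ) 1 := ⟨by simp [ha]; linarith, by simp [ha]; linarith⟩
  have h1I : (1:ℝ) ∈ Set.Icc (0:ℝ) 1 := ⟨by norm_num, le_rfl⟩
  -- basic differentiability facts
  have hf' : ContDiffOn ℝ 1 (deriv f) U := hf.deriv_of_isOpen hU (by norm_num)
  have hdf : ∀ x ∈ U, HasDerivAt f (deriv f x) x := fun x hx =>
    ((hf.differentiableOn (by norm_num)).differentiableAt (hU.mem_nhds hx)).hasDerivAt
  have hdf' : ∀ x ∈ U, HasDerivAt (deriv f) (deriv (deriv f) x) x := fun x hx =>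
    ((hf'.differentiableOn (by norm_num)).differentiableAt (hU.mem_nhds hx)).hasDerivAt
  have hcont'' : ContinuousOn (deriv (deriv f)) U :=
    hf'.continuousOn_deriv_of_isOpen hU le_rfl
  have hcontf : ContinuousOn f (Set.Icc (0:ℝ) 1) := hf.continuousOn.mono hUIcc
  have hcontf' : ContinuousOn (deriv f) (Set.Icc (0:ℝ) 1) := hf'.continuousOn.mono hUIcc
  -- M bounds the second derivative
  have hMb : ∀ r ∈ Set.Icc (0:ℝ) 1, |deriv (deriv f) r| ≤ M := by
    intro r hr
    rw [hM]
    exact le_csSup (isCompact_Icc.image_of_continuousOn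
      ((hcont''.mono hUIcc).abs)).bddAbove ⟨r, hr, rfl⟩
  have hM0 : 0 ≤ M := le_trans (abs_nonneg _) (hMb 1 h1I)
  -- Step A : deriv f x ≥ deriv f 1 - M * (1 - x) on [0,1]
  have hmono : AntitoneOn (fun x => deriv f x - M * x) (Set.Icc (0:ℝ) 1) := by
    apply antitoneOn_of_deriv_nonpos (convex_Icc 0 1)
    · exact hcontf'.sub (continuous_const.mul continuous_id).continuousOn
    · intro x hx
      rw [interior_Icc] at hx
      have hxU : x ∈ U := hUIcc ⟨hx.1.le, hx.2.le⟩
      exact (((hdf' x hxU).sub ((hasDerivAt_id x).const_mul M)).differentiableAt).differentiableWithinAt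
    · intro x hx
      rw [interior_Icc] at hx
      have hxU : x ∈ U := hUIcc ⟨hx.1.le, hx.2.le⟩
      have hd : HasDerivAt (fun x => deriv f x - M * x) (deriv (deriv f) x - M * 1) x :=
        (hdf' x hxU).sub ((hasDerivAt_id x).const_mul M)
      rw [hd.deriv]
      have := (abs_le.mp (hMb x ⟨hx.1.le, hx.2.le⟩)).2
      linarith
  have hA : ∀ x ∈ Set.Icc (0:ℝ) 1, deriv f 1 - M * (1 - x) ≤ deriv f x := by
    intro x hx
    have := hmono hx h1I hx.2
    simp only at this
    linarith
  -- Step B : f x ≤ deriv f 1 * (x - 1) + M/2 * (1 - x)^2 on [0,1]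
  have hanti : AntitoneOn
      (fun x => deriv f 1 * (x - 1) + M / 2 * (1 - x) ^ 2 - f x) (Set.Icc (0:ℝ) 1) := by
    apply antitoneOn_of_deriv_nonpos (convex_Icc 0 1)
    · apply ContinuousOn.sub _ hcontf
      exact (continuous_const.mul (continuous_id.sub continuous_const)).continuousOn.add
        (continuous_const.mul ((continuous_const.sub continuous_id).pow 2)).continuousOn
    · intro x hx
      rw [interior_Icc] at hx
      have hxU : x ∈ U := hUIcc ⟨hx.1.le, hx.2.le⟩
      have h1 : HasDerivAt (fun x : ℝ => x - 1) 1 x := (hasDerivAt_id x).sub_const 1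
      have h2 : HasDerivAt (fun x : ℝ => 1 - x) (-1) x := by
        simpa using (hasDerivAt_id x).const_sub (1:ℝ)
      exact (((h1.const_mul (deriv f 1)).add ((h2.pow 2).const_mul (M/2))).sub
        (hdf x hxU)).differentiableAt.differentiableWithinAt
    · intro x hx
      rw [interior_Icc] at hx
      have hxU : x ∈ U := hUIcc ⟨hx.1.le, hx.2.le⟩
      have h1 : HasDerivAt (fun x : ℝ => x - 1) 1 x := (hasDerivAt_id x).sub_const 1
      have h2 : HasDerivAt (fun x : ℝ => 1 - x) (-1) x := by
        simpa using (hasDerivAt_id x).const_sub (1:ℝ)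
      have hd : HasDerivAt (fun x => deriv f 1 * (x - 1) + M / 2 * (1 - x) ^ 2 - f x)
          (deriv f 1 * 1 + M / 2 * (↑2 * (1 - x) ^ (2 - 1) * -1) - deriv f x) x :=
        ((h1.const_mul (deriv f 1)).add ((h2.pow 2).const_mul (M/2))).sub (hdf x hxU)
      rw [hd.deriv]
      have := hA x ⟨hx.1.le, hx.2.le⟩
      push_cast
      nlinarith
  have hB : ∀ x ∈ Set.Icc (0:ℝ) 1, f x ≤ deriv f 1 * (x - 1) + M / 2 * (1 - x) ^ 2 := by
    intro x hx
    have := hanti hx h1I hx.2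
    simp only [hf1] at this
    nlinarith
  -- Step C : integral bound
  have hsub : Set.Icc a 1 ⊆ Set.Icc (0:ℝ) 1 := Set.Icc_subset_Icc haI.1 le_rfl
  have huIcc : Set.uIcc a 1 = Set.Icc a 1 := Set.uIcc_of_le haI.2
  have hfint : IntervalIntegrable f volume a 1 := by
    apply ContinuousOn.intervalIntegrable
    rw [huIcc]; exact hcontf.mono hsub
  have hg : Continuous (fun x : ℝ => deriv f 1 * (x - 1) + M / 2 * (1 - x) ^ 2) :=
    (continuous_const.mul (continuous_id.sub continuous_const)).add
      (continuous_const.mul ((continuous_const.sub continuous_id).pow 2))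
  have hgint : IntervalIntegrable (fun x : ℝ => deriv f 1 * (x - 1) + M / 2 * (1 - x) ^ 2)
      volume a 1 := hg.intervalIntegrable a 1
  have hmonoI : (∫ ρ in a..1, f ρ) ≤
      ∫ ρ in a..1, (deriv f 1 * (ρ - 1) + M / 2 * (1 - ρ) ^ 2) := by
    apply intervalIntegral.integral_mono_on haI.2 hfint hgint
    intro x hx
    exact hB x (hsub hx)
  have hgval : (∫ ρ in a..1, (deriv f 1 * (ρ - 1) + M / 2 * (1 - ρ) ^ 2)) =
      -(deriv f 1) * ξ ^ 2 / 2 + M * ξ ^ 3 / 6 := by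
    have hP : ∀ ρ ∈ Set.uIcc a 1,
        HasDerivAt (fun ρ => deriv f 1 / 2 * (ρ - 1) ^ 2 - M / 6 * (1 - ρ) ^ 3)
          (deriv f 1 * (ρ - 1) + M / 2 * (1 - ρ) ^ 2) ρ := by
      intro ρ _
      have h1 : HasDerivAt (fun x : ℝ => x - 1) 1 ρ := (hasDerivAt_id ρ).sub_const 1
      have h2 : HasDerivAt (fun x : ℝ => 1 - x) (-1) ρ := by
        simpa using (hasDerivAt_id ρ).const_sub (1:ℝ)
      have := ((h1.pow 2).const_mul (deriv f 1 / 2)).sub ((h2.pow 3).const_mul (M / 6))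
      refine this.congr_deriv ?_
      push_cast
      ring
    rw [intervalIntegral.integral_eq_sub_of_hasDerivAt hP hgint]
    have : (1:ℝ) - a = ξ := by simp [ha]
    simp [ha]
    ring
  have hFb : F a ≤ -(deriv f 1) * ξ ^ 2 / 2 + M * ξ ^ 3 / 6 := by
    rw [hF a]; exact le_trans hmonoI (le_of_eq hgval)
  -- conclude
  have hcs2 : cs ^ 2 = -(2 * deriv f 1) := by
    rw [hcs, sq_sqrt]; linarith
  have hpos : 0 < cs ^ 2 + M := by rw [hcs2]; linarith
  have hkey : c ^ 2 ≤ (1 - ξ) * (cs ^ 2 + M) := by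
    have h4 : c ^ 2 * ξ ^ 2 ≤ 4 * (1 - ξ) * (-(deriv f 1) * ξ ^ 2 / 2 + M * ξ ^ 3 / 6) := by
      rw [heq]
      have h1ξ : (0:ℝ) ≤ 1 - ξ := by linarith
      nlinarith [hFb]
    have hξ2 : (0:ℝ) < ξ ^ 2 := by positivity
    rw [hcs2] at *
    have h1ξ : (0:ℝ) ≤ 1 - ξ := by linarith
    have hprod : 0 ≤ (1 - ξ) * M * ξ ^ 2 * (1 - 2/3 * ξ) :=
      mul_nonneg (mul_nonneg (mul_nonneg h1ξ hM0) hξ2.le) (by linarith)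
    have h5 : c ^ 2 * ξ ^ 2 ≤ ((1 - ξ) * (-(2 * deriv f 1) + M)) * ξ ^ 2 := by nlinarith
    exact le_of_mul_le_mul_right h5 hξ2
  rw [ge_iff_le, div_le_iff₀ hpos]
  exact hkey
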